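/- Let j : ℝᴺ → [0,∞] be measurable, even, with 0 < ∫ min{1,|z|²} j(z) dz < ∞. For a measurable set Ω ⊂ ℝᴺ with |Ω| < ∞ and any x ∈ ℝᴺ, the killing measure κ_Ω(x) = ∫_{ℝᴺ∖Ω} j(x−y) dy satisfies κ_Ω(x) ≥ κ(|Ω|), where κ(r) := ∫_{{j < d_j(r)}} j(z) dz + d_j(r)·(|{j ≥ d_j(r)}| − r) and d_j is the decreasing rearrangement of j. -/

import Mathlib

open MeasureTheory ENNReal Filter Topology

noncomputable section

/-- N-dimensional Euclidean space. -/
abbrev Euc (N : ℕ) := EuclideanSpace ℝ (Fin N)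

/-- The nonlocal quadratic form ℰ_j(u,u) = (1/2)∬ (u(x)-u(y))² j(x-y) dx dy. -/
def Ej {N : ℕ} (j : Euc N → ℝ≥0∞) (u : Euc N → ℝ) : ℝ≥0∞ :=
  (1/2 : ℝ≥0∞) * ∫⁻ p : Euc N × Euc N,
    ENNReal.ofReal ((u p.1 - u p.2)^2) * j (p.1 - p.2) ∂(volume.prod volume)

/-- The squared L² norm of u. -/
def l2sq {N : ℕ} (u : Euc N → ℝ) : ℝ≥0∞ := ∫⁻ x, ENNReal.ofReal ((u x)^2)

/-- The squared norm of 𝒟ʲ(ℝᴺ): ‖u‖² = ℰ_j(u,u) + ‖u‖²_{L²}. -/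
def DnormSq {N : ℕ} (j : Euc N → ℝ≥0∞) (u : Euc N → ℝ) : ℝ≥0∞ := Ej j u + l2sq u

/-- Membership in 𝒟ʲ(ℝᴺ) = {u ∈ L² : ℰ_j(u,u) < ∞}. -/
def MemDj {N : ℕ} (j : Euc N → ℝ≥0∞) (u : Euc N → ℝ) : Prop :=
  MemLp u 2 (volume : Measure (Euc N)) ∧ Ej j u < ⊤

/-- Condition (A1): 0 < ∫ min{1,|z|²} j(z) dz < ∞ (evenness stated separately). -/
def CondA1 {N : ℕ} (j : Euc N → ℝ≥0∞) : Prop :=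
  0 < ∫⁻ z, ENNReal.ofReal (min 1 (‖z‖^2)) * j z ∧
    (∫⁻ z, ENNReal.ofReal (min 1 (‖z‖^2)) * j z) < ⊤

/-- The decreasing rearrangement d_j(r) = inf{c ≥ 0 : |{j > c}| ≤ r}. -/
def decRearr {N : ℕ} (j : Euc N → ℝ≥0∞) (r : ℝ≥0∞) : ℝ≥0∞ :=
  sInf {c : ℝ≥0∞ | volume {x : Euc N | c < j x} ≤ r}

/-- The killing measure κ_Ω(x) = ∫_{ℝᴺ∖Ω} j(x−y) dy. -/
def kappaSet {N : ℕ} (j : Euc N → ℝ≥0∞) (Ω : Set (Euc N)) (x : Euc N) : ℝ≥0∞ :=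
  ∫⁻ y in Ωᶜ, j (x - y)

/-- κ(r) = ∫_{{j < d_j(r)}} j dz + d_j(r)(|{j ≥ d_j(r)}| − r). -/
def kappaFun {N : ℕ} (j : Euc N → ℝ≥0∞) (r : ℝ≥0∞) : ℝ≥0∞ :=
  (∫⁻ z in {z : Euc N | j z < decRearr j r}, j z) +
    decRearr j r * (volume {z : Euc N | decRearr j r ≤ j z} - r)

open Set in
private lemma level_finite {N : ℕ} {j : Euc N → ℝ≥0∞} (hj : Measurable j)
    (hfin : (∫⁻ z, ENNReal.ofReal (min 1 (‖z‖^2)) * j z) < ⊤)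
    {c : ℝ≥0∞} (hc : c ≠ 0) : volume {z : Euc N | c < j z} ≠ ⊤ := by
  set S := {z : Euc N | c < j z} with hS
  have hSm : MeasurableSet S := measurableSet_lt measurable_const hj
  have h1 : c * volume (S \ Metric.ball (0 : Euc N) 1) ≤
      ∫⁻ z, ENNReal.ofReal (min 1 (‖z‖^2)) * j z := by
    calc c * volume (S \ Metric.ball (0 : Euc N) 1)
        = ∫⁻ _ in S \ Metric.ball (0 : Euc N) 1, c := (setLIntegral_const _ _).symm
      _ ≤ ∫⁻ z in S \ Metric.ball (0 : Euc N) 1, ENNReal.ofReal (min 1 (‖z‖^2)) * j z := by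
          apply setLIntegral_mono' (hSm.diff measurableSet_ball)
          intro z hz
          have hz1 : (1:ℝ) ≤ ‖z‖ := by
            have := hz.2
            simpa [Metric.mem_ball, dist_zero_right, not_lt] using this
          have hmin : min 1 (‖z‖^2) = 1 := min_eq_left (by nlinarith)
          rw [hmin]
          simpa using hz.1.le
      _ ≤ ∫⁻ z, ENNReal.ofReal (min 1 (‖z‖^2)) * j z := setLIntegral_le_lintegral _ _
  have h2 : volume (S \ Metric.ball (0 : Euc N) 1) ≠ ⊤ := by
    intro h
    rw [h, ENNReal.mul_top hc] at h1
    exact (lt_irrefl ⊤ (lt_of_le_of_lt h1 hfin))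
  have h3 : volume S ≤ volume (Metric.ball (0 : Euc N) 1) + volume (S \ Metric.ball (0 : Euc N) 1) := by
    refine le_trans (measure_mono ?_) (measure_union_le _ _)
    intro z hz
    by_cases h : z ∈ Metric.ball (0 : Euc N) 1
    · exact Or.inl h
    · exact Or.inr ⟨hz, h⟩
  exact (lt_of_le_of_lt h3 (ENNReal.add_lt_top.mpr ⟨measure_ball_lt_top, h2.lt_top⟩)).ne

open Set in
private lemma lt_level_of_lt_decRearr {N : ℕ} {j : Euc N → ℝ≥0∞} {r c : ℝ≥0∞}
    (h : c < decRearr j r) : r < volume {z : Euc N | c < j z} := by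
  by_contra hcon
  push_neg at hcon
  exact absurd (sInf_le hcon : decRearr j r ≤ c) (not_le.mpr h)

open Set in
private lemma le_vol_ge {N : ℕ} {j : Euc N → ℝ≥0∞} (hj : Measurable j)
    (hfin : (∫⁻ z, ENNReal.ofReal (min 1 (‖z‖^2)) * j z) < ⊤)
    {r : ℝ≥0∞} (hd : decRearr j r ≠ 0) :
    r ≤ volume {z : Euc N | decRearr j r ≤ j z} := by
  set d := decRearr j r with hdd
  obtain ⟨u, hu_mono, hu_mem, hu_tendsto⟩ := exists_seq_strictMono_tendsto' (zero_lt_iff.mpr hd)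
  have hset : {z : Euc N | d ≤ j z} = ⋂ n, {z : Euc N | u n < j z} := by
    ext z
    simp only [mem_iInter, mem_setOf_eq]
    constructor
    · intro h n; exact lt_of_lt_of_le (hu_mem n).2 h
    · intro h; exact le_of_tendsto' hu_tendsto fun n => (h n).le
  have hanti : Antitone fun n => {z : Euc N | u n < j z} := by
    intro m n hmn z hz
    exact lt_of_le_of_lt (hu_mono.monotone hmn) hz
  rw [hset, hanti.measure_iInter
    (fun n => (measurableSet_lt measurable_const hj).nullMeasurableSet)
    ⟨0, level_finite hj hfin (hu_mem 0).1.ne'⟩]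
  exact le_iInf fun n => (lt_level_of_lt_decRearr (hu_mem n).2).le

open Set in
private lemma key_lemma {N : ℕ} {j : Euc N → ℝ≥0∞} (hj : Measurable j)
    (hfin : (∫⁻ z, ENNReal.ofReal (min 1 (‖z‖^2)) * j z) < ⊤)
    (A : Set (Euc N)) (hA : MeasurableSet A) (hAfin : volume A ≠ ⊤) :
    kappaFun j (volume A) ≤ ∫⁻ z in Aᶜ, j z := by
  set r := volume A with hr
  set d := decRearr j r with hdd
  by_cases hd : d = 0
  · have h0 : {z : Euc N | j z < d} = ∅ := by
      ext z; simp [hd]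
    rw [kappaFun, ← hdd, hd]
    simp
  · set Sl := {z : Euc N | j z < d} with hSl'
    set Sg := {z : Euc N | d ≤ j z} with hSg'
    have hSl : MeasurableSet Sl := measurableSet_lt hj measurable_const
    have hSg : MeasurableSet Sg := measurableSet_le measurable_const hj
    have hdiff : ∀ B : Set (Euc N), B \ Sl = B ∩ Sg := by
      intro B; ext z; simp [hSl', hSg', not_lt]
    set a := volume (A ∩ Sl) with ha'
    set b := volume (A ∩ Sg) with hb'
    set c := volume (Aᶜ ∩ Sg) with hc'
    have hab : a + b = r := by
      rw [ha', hb', ← hdiff A]; exact measure_inter_add_diff A hSl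
    have hbc : b + c = volume Sg := by
      rw [hb', hc', inter_comm A Sg, inter_comm Aᶜ Sg, ← diff_eq]
      exact measure_inter_add_diff Sg hA
    have hb_fin : b ≠ ⊤ := by
      intro h; rw [h] at hab; exact hAfin (by simpa using hab.symm)
    have hrF : r ≤ volume Sg := le_vol_ge hj hfin hd
    have hac : a ≤ c := by
      have h : a + b ≤ c + b := by
        rw [hab, add_comm c b, hbc]; exact hrF
      exact (ENNReal.add_le_add_iff_right hb_fin).mp h
    have hnum : d * a + d * (volume Sg - r) ≤ d * c := by
      have h1 : volume Sg - r ≤ c - a := by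
        rw [tsub_le_iff_right, ← hab, ← hbc]
        have heq : b + c = c - a + (a + b) := by
          rw [← add_assoc, tsub_add_cancel_of_le hac, add_comm]
        exact heq.le
      calc d * a + d * (volume Sg - r) ≤ d * a + d * (c - a) :=
            add_le_add_right (mul_le_mul_right h1 d) _
        _ = d * (a + (c - a)) := (mul_add d a (c - a)).symm
        _ = d * c := by rw [add_tsub_cancel_of_le hac]
    have hI1 : ∫⁻ z in A ∩ Sl, j z ≤ d * a := by
      calc ∫⁻ z in A ∩ Sl, j z ≤ ∫⁻ _ in A ∩ Sl, d :=
            setLIntegral_mono' (hA.inter hSl) fun z hz => hz.2.le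
        _ = d * a := setLIntegral_const _ _
    have hI2 : d * c ≤ ∫⁻ z in Aᶜ ∩ Sg, j z := by
      calc d * c = ∫⁻ _ in Aᶜ ∩ Sg, d := (setLIntegral_const _ _).symm
        _ ≤ ∫⁻ z in Aᶜ ∩ Sg, j z :=
            setLIntegral_mono' (hA.compl.inter hSg) fun z hz => hz.2
    have hsplit1 : ∫⁻ z in Sl, j z = (∫⁻ z in Sl ∩ A, j z) + ∫⁻ z in Sl \ A, j z :=
      (lintegral_inter_add_diff j Sl hA).symm
    have hsplit2 : (∫⁻ z in Aᶜ ∩ Sl, j z) + ∫⁻ z in Aᶜ ∩ Sg, j z = ∫⁻ z in Aᶜ, j z := by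
      rw [← hdiff Aᶜ]
      exact lintegral_inter_add_diff j Aᶜ hSl
    have hI1' : ∫⁻ z in Sl ∩ A, j z ≤ d * a := by
      rw [inter_comm]; exact hI1
    have hSlA : (Sl \ A : Set (Euc N)) = Aᶜ ∩ Sl := by
      rw [diff_eq, inter_comm]
    calc kappaFun j r = (∫⁻ z in Sl, j z) + d * (volume Sg - r) := rfl
      _ = (∫⁻ z in Sl ∩ A, j z) + (∫⁻ z in Aᶜ ∩ Sl, j z) + d * (volume Sg - r) := by
          rw [hsplit1, hSlA]
      _ ≤ d * a + (∫⁻ z in Aᶜ ∩ Sl, j z) + d * (volume Sg - r) := by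
          gcongr
      _ = (∫⁻ z in Aᶜ ∩ Sl, j z) + (d * a + d * (volume Sg - r)) := by ring
      _ ≤ (∫⁻ z in Aᶜ ∩ Sl, j z) + d * c := add_le_add_right hnum _
      _ ≤ (∫⁻ z in Aᶜ ∩ Sl, j z) + ∫⁻ z in Aᶜ ∩ Sg, j z := add_le_add_right hI2 _
      _ = ∫⁻ z in Aᶜ, j z := hsplit2

--example : True := trivial

/-- Lower estimate for the killing measure: κ_Ω(x) ≥ κ(|Ω|). -/
theorem killing_measure_lower_bound {N : ℕ} (j : Euc N → ℝ≥0∞) (hj : Measurable j)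
    (heven : ∀ z, j (-z) = j z) (hA1 : CondA1 j)
    (Ω : Set (Euc N)) (hΩ : MeasurableSet Ω) (hΩfin : volume Ω ≠ ⊤) (x : Euc N) :
    kappaFun j (volume Ω) ≤ kappaSet j Ω x := by
  have hT : MeasurePreserving (fun y : Euc N => x - y) (volume : Measure (Euc N)) volume := by
    simp_rw [sub_eq_add_neg]
    exact (measurePreserving_add_left volume x).comp (Measure.measurePreserving_neg volume)
  set A := (fun y : Euc N => x - y) ⁻¹' Ω with hA'
  have hA : MeasurableSet A := hΩ.preimage hT.measurable
  have hvol : volume A = volume Ω := hT.measure_preimage hΩ.nullMeasurableSet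
  have hpre : (fun y : Euc N => x - y) ⁻¹' (Aᶜ) = Ωᶜ := by
    rw [hA', Set.preimage_compl]
    congr 1
    ext y
    simp [sub_sub_cancel]
  have hkappa : kappaSet j Ω x = ∫⁻ z in Aᶜ, j z := by
    rw [kappaSet]
    calc ∫⁻ y in Ωᶜ, j (x - y) = ∫⁻ y in (fun y : Euc N => x - y) ⁻¹' (Aᶜ), j (x - y) := by
          rw [hpre]
      _ = ∫⁻ z in Aᶜ, j z := hT.setLIntegral_comp_preimage hA.compl hj
  rw [hkappa, ← hvol]
  exact key_lemma hj hA1.2 A hA (hvol ▸ hΩfin)
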